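/- If a CFG G in CNF generates a nonempty language not containing ε, then for every string I over the terminal alphabet, the covering grammar G' (with insertion, deletion and substitution error productions) derives I; in particular the minimum total error count of a derivation of I from S in G' is a well-defined natural number at most |I| + minimum length of a string in L(G). -/

import Mathlib

/-- Weighted derivation relation for a weighted CFG given by a production relation
`P A γ c` (the production `A →^c γ` has error count `c`). -/
inductive Derives {N T : Type*} (P : N → List (N ⊕ T) → ℕ → Prop) :
    List (N ⊕ T) → List (N ⊕ T) → ℕ → Prop
  | refl (w : List (N ⊕ T)) : Derives P w w 0
  | step {α β γ w : List (N ⊕ T)} {A : N} {c₁ c₂ : ℕ} :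
      P A γ c₂ → Derives P (α ++ γ ++ β) w c₁ →
      Derives P (α ++ [Sum.inl A] ++ β) w (c₁ + c₂)

/-- Production relation of the base CNF grammar `G` (all costs `0`): binary rules
`R2 A B C` (i.e. `A → BC`) and terminal rules `R1 A a` (i.e. `A → a`). -/
def baseProds {N T : Type*} (R2 : N → N → N → Prop) (R1 : N → T → Prop) :
    N → List (N ⊕ T) → ℕ → Prop := fun A rhs c =>
  c = 0 ∧ ((∃ B C : N, rhs = [Sum.inl B, Sum.inl C] ∧ R2 A B C) ∨
    (∃ a : T, rhs = [Sum.inr a] ∧ R1 A a))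

/-- Nonterminals of the covering grammar: the original ones plus `H` and `I`. -/
inductive Cov (N : Type*) : Type _
  | orig (A : N) | H | I

open Cov in
/-- Production relation of the covering grammar `G'`: the (cost-`0`) productions of `G`
together with the error productions `H →⁰ HI`, `H →⁰ I`, `I →¹ a` for all `a ∈ T`, and,
for each `(A → a) ∈ P`: `A →¹ b` for `b ≠ a`, `A →¹ ε`, `A →⁰ AH`, `A →⁰ HA`. -/
def covProds {N T : Type*} (R2 : N → N → N → Prop) (R1 : N → T → Prop) :
    Cov N → List (Cov N ⊕ T) → ℕ → Prop := fun X rhs c =>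
  (∃ A B C : N, X = orig A ∧ rhs = [Sum.inl (orig B), Sum.inl (orig C)] ∧ R2 A B C ∧ c = 0) ∨
  (∃ (A : N) (a : T), X = orig A ∧ rhs = [Sum.inr a] ∧ R1 A a ∧ c = 0) ∨
  (X = H ∧ rhs = [Sum.inl H, Sum.inl I] ∧ c = 0) ∨
  (X = H ∧ rhs = [Sum.inl I] ∧ c = 0) ∨
  (∃ a : T, X = I ∧ rhs = [Sum.inr a] ∧ c = 1) ∨
  (∃ (A : N) (a b : T), X = orig A ∧ R1 A a ∧ b ≠ a ∧ rhs = [Sum.inr b] ∧ c = 1) ∨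
  (∃ (A : N) (a : T), X = orig A ∧ R1 A a ∧ rhs = [] ∧ c = 1) ∨
  (∃ (A : N) (a : T), X = orig A ∧ R1 A a ∧ rhs = [Sum.inl (orig A), Sum.inl H] ∧ c = 0) ∨
  (∃ (A : N) (a : T), X = orig A ∧ R1 A a ∧ rhs = [Sum.inl H, Sum.inl (orig A)] ∧ c = 0)

section CoverAux

variable {N T : Type*}

lemma derives_cast {P : N → List (N ⊕ T) → ℕ → Prop} {x y : List (N ⊕ T)} {c c' : ℕ}
    (h : Derives P x y c) (hc : c = c') : Derives P x y c' := hc ▸ h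

lemma derives_trans {P : N → List (N ⊕ T) → ℕ → Prop} {x y z : List (N ⊕ T)} {c₁ c₂ : ℕ}
    (h₁ : Derives P x y c₁) (h₂ : Derives P y z c₂) : Derives P x z (c₁ + c₂) := by
  induction h₁ with
  | refl w => simpa using h₂
  | @step α β γ w A d₁ d₂ hp hd ih =>
      exact derives_cast (Derives.step hp (ih h₂)) (by omega)

lemma derives_context {P : N → List (N ⊕ T) → ℕ → Prop} {x y : List (N ⊕ T)} {c : ℕ}
    (l r : List (N ⊕ T)) (h : Derives P x y c) :
    Derives P (l ++ x ++ r) (l ++ y ++ r) c := by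
  induction h with
  | refl w => exact Derives.refl _
  | @step α β γ w A d₁ d₂ hp hd ih =>
      have h' : Derives P ((l ++ α) ++ γ ++ (β ++ r)) (l ++ w ++ r) d₁ := by
        simpa [List.append_assoc] using ih
      simpa [List.append_assoc] using Derives.step hp h'

lemma derives_single {P : N → List (N ⊕ T) → ℕ → Prop} {A : N} {γ : List (N ⊕ T)} {c : ℕ}
    (hp : P A γ c) : Derives P [Sum.inl A] γ c := by
  have h0 : Derives P ([] ++ γ ++ []) γ 0 := by simpa using Derives.refl γ
  simpa using Derives.step hp h0

/-- Tree-style generation relation for the base CNF grammar. -/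
inductive Gen (R2 : N → N → N → Prop) (R1 : N → T → Prop) : N → List T → Prop
  | leaf {A : N} {a : T} : R1 A a → Gen R2 R1 A [a]
  | node {A B C : N} {u v : List T} :
      R2 A B C → Gen R2 R1 B u → Gen R2 R1 C v → Gen R2 R1 A (u ++ v)

/-- Pointwise generation of a terminal string from a sentential form. -/
inductive GenF (R2 : N → N → N → Prop) (R1 : N → T → Prop) : List (N ⊕ T) → List T → Prop
  | nil : GenF R2 R1 [] []
  | tm {a : T} {rest : List (N ⊕ T)} {v : List T} :
      GenF R2 R1 rest v → GenF R2 R1 (Sum.inr a :: rest) (a :: v)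
  | nt {A : N} {rest : List (N ⊕ T)} {u v : List T} :
      Gen R2 R1 A u → GenF R2 R1 rest v → GenF R2 R1 (Sum.inl A :: rest) (u ++ v)

lemma genF_map {R2 : N → N → N → Prop} {R1 : N → T → Prop} (u : List T) :
    GenF R2 R1 (u.map Sum.inr) u := by
  induction u with
  | nil => exact GenF.nil
  | cons a u ih => exact GenF.tm ih

lemma genF_append {R2 : N → N → N → Prop} {R1 : N → T → Prop}
    {x y : List (N ⊕ T)} {u v : List T}
    (hx : GenF R2 R1 x u) (hy : GenF R2 R1 y v) : GenF R2 R1 (x ++ y) (u ++ v) := by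
  induction hx with
  | nil => simpa using hy
  | tm _ ih => exact GenF.tm ih
  | nt hA _ ih => simpa [List.append_assoc] using GenF.nt hA ih

lemma genF_split {R2 : N → N → N → Prop} {R1 : N → T → Prop} :
    ∀ {x y : List (N ⊕ T)} {w : List T}, GenF R2 R1 (x ++ y) w →
      ∃ u v, w = u ++ v ∧ GenF R2 R1 x u ∧ GenF R2 R1 y v := by
  intro x
  induction x with
  | nil => exact fun h => ⟨[], _, rfl, GenF.nil, h⟩
  | cons s x ih =>
      intro y w h
      cases h with
      | tm h' =>
          obtain ⟨u, v, rfl, hu, hv⟩ := ih h'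
          exact ⟨_ :: u, v, rfl, GenF.tm hu, hv⟩
      | nt hA h' =>
          obtain ⟨u, v, rfl, hu, hv⟩ := ih h'
          exact ⟨_ ++ u, v, by simp [List.append_assoc], GenF.nt hA hu, hv⟩

lemma derives_to_genF {R2 : N → N → N → Prop} {R1 : N → T → Prop}
    {α z : List (N ⊕ T)} {c : ℕ} (h : Derives (baseProds R2 R1) α z c) :
    ∀ u : List T, z = u.map Sum.inr → GenF R2 R1 α u := by
  induction h with
  | refl w => rintro u rfl; exact genF_map u
  | @step α β γ w A c₁ c₂ hp hd ih =>
      rintro u rfl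
      have hg : GenF R2 R1 (α ++ γ ++ β) u := ih u rfl
      rw [List.append_assoc] at hg
      obtain ⟨u₁, v, rfl, h₁, hv⟩ := genF_split hg
      obtain ⟨u₂, u₃, rfl, h₂, h₃⟩ := genF_split hv
      have hA : Gen R2 R1 A u₂ := by
        obtain ⟨-, ⟨B, C, rfl, hR2⟩ | ⟨a, rfl, hR1⟩⟩ := hp
        · cases h₂ with
          | nt hB h' =>
              cases h' with
              | nt hC h'' =>
                  cases h''
                  simpa using Gen.node hR2 hB hC
        · cases h₂ with
          | tm h' => cases h'; exact Gen.leaf hR1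
      rw [List.append_assoc]
      exact genF_append h₁ (GenF.nt hA h₃)

variable {R2 : N → N → N → Prop} {R1 : N → T → Prop}

open Cov

lemma h_derives (v : List T) (hv : v ≠ []) :
    Derives (covProds R2 R1) [Sum.inl (Cov.H : Cov N)] (v.map Sum.inr) v.length := by
  induction v using List.reverseRecOn with
  | nil => exact absurd rfl hv
  | append_singleton ys a ih =>
      have hI : Derives (covProds R2 R1) [Sum.inl (Cov.I : Cov N)] [Sum.inr a] 1 :=
        derives_single (Or.inr <| Or.inr <| Or.inr <| Or.inr <| Or.inl ⟨a, rfl, rfl, rfl⟩)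
      rcases eq_or_ne ys ([] : List T) with rfl | hys
      · have h1 : Derives (covProds R2 R1) [Sum.inl (Cov.H : Cov N)] [Sum.inl Cov.I] 0 :=
          derives_single (Or.inr <| Or.inr <| Or.inr <| Or.inl ⟨rfl, rfl, rfl⟩)
        have := derives_trans h1 hI
        simpa using this
      · have h1 : Derives (covProds R2 R1) [Sum.inl (Cov.H : Cov N)]
            [Sum.inl Cov.H, Sum.inl Cov.I] 0 :=
          derives_single (Or.inr <| Or.inr <| Or.inl ⟨rfl, rfl, rfl⟩)
        have h2 : Derives (covProds R2 R1) [Sum.inl (Cov.H : Cov N), Sum.inl Cov.I]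
            (ys.map Sum.inr ++ [Sum.inl Cov.I]) ys.length := by
          simpa using derives_context [] [Sum.inl Cov.I] (ih hys)
        have h3 : Derives (covProds R2 R1) (ys.map Sum.inr ++ [Sum.inl Cov.I])
            (ys.map Sum.inr ++ [Sum.inr a]) 1 := by
          simpa using derives_context (ys.map Sum.inr) [] hI
        have := derives_trans h1 (derives_trans h2 h3)
        simpa [Nat.add_comm] using this

lemma leaf_one {A : N} {a : T} (hR1 : R1 A a) (b : T) :
    ∃ c ≤ 1, Derives (covProds R2 R1) [Sum.inl (Cov.orig A)] [Sum.inr b] c := by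
  rcases eq_or_ne b a with rfl | hb
  · exact ⟨0, by omega,
      derives_single (Or.inr <| Or.inl ⟨A, b, rfl, rfl, hR1, rfl⟩)⟩
  · exact ⟨1, le_refl 1,
      derives_single (Or.inr <| Or.inr <| Or.inr <| Or.inr <| Or.inr <| Or.inl
        ⟨A, a, b, rfl, hR1, hb, rfl, rfl⟩)⟩

lemma leaf_cov {A : N} {a : T} (hR1 : R1 A a) (v : List T) :
    ∃ c ≤ v.length + 1,
      Derives (covProds R2 R1) [Sum.inl (Cov.orig A)] (v.map Sum.inr) c := by
  cases v with
  | nil =>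
      exact ⟨1, by omega,
        derives_single (Or.inr <| Or.inr <| Or.inr <| Or.inr <| Or.inr <| Or.inr <| Or.inl
          ⟨A, a, rfl, hR1, rfl, rfl⟩)⟩
  | cons b rest =>
      rcases eq_or_ne rest ([] : List T) with rfl | hrest
      · obtain ⟨c, hc, hd⟩ := leaf_one (R2 := R2) hR1 b
        exact ⟨c, by simpa using Nat.le_succ_of_le hc, by simpa using hd⟩
      · have h1 : Derives (covProds R2 R1) [Sum.inl (Cov.orig A)]
            [Sum.inl (Cov.orig A), Sum.inl Cov.H] 0 :=
          derives_single (Or.inr <| Or.inr <| Or.inr <| Or.inr <| Or.inr <| Or.inr <|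
            Or.inr <| Or.inl ⟨A, a, rfl, hR1, rfl, rfl⟩)
        obtain ⟨c, hc, hd⟩ := leaf_one (R2 := R2) hR1 b
        have h2 : Derives (covProds R2 R1) [Sum.inl (Cov.orig A), Sum.inl Cov.H]
            ([Sum.inr b] ++ [Sum.inl Cov.H]) c := by
          simpa using derives_context [] [Sum.inl Cov.H] hd
        have h3 : Derives (covProds R2 R1) ([Sum.inr b] ++ [Sum.inl Cov.H])
            ([Sum.inr b] ++ rest.map Sum.inr) rest.length := by
          simpa using derives_context [Sum.inr b] [] (h_derives (R2 := R2) rest hrest)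
        refine ⟨0 + c + rest.length, by simp; omega, ?_⟩
        have := derives_trans h1 (derives_trans h2 h3)
        simpa [Nat.add_assoc] using this

lemma gen_cov {A : N} {u : List T} (h : Gen R2 R1 A u) :
    ∀ w : List T, ∃ c, Derives (covProds R2 R1) [Sum.inl (Cov.orig A)] (w.map Sum.inr) c ∧
      c ≤ w.length + u.length := by
  induction h with
  | @leaf A a hR1 =>
      intro w
      obtain ⟨c, hc, hd⟩ := leaf_cov (R2 := R2) hR1 w
      exact ⟨c, hd, by simpa using hc⟩
  | @node A B C u v hR2 hB hC ihB ihC =>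
      intro w
      obtain ⟨cB, dB, hcB⟩ := ihB []
      obtain ⟨cC, dC, hcC⟩ := ihC w
      have h1 : Derives (covProds R2 R1) [Sum.inl (Cov.orig A)]
          [Sum.inl (Cov.orig B), Sum.inl (Cov.orig C)] 0 :=
        derives_single (Or.inl ⟨A, B, C, rfl, rfl, hR2, rfl⟩)
      have h2 : Derives (covProds R2 R1) [Sum.inl (Cov.orig B), Sum.inl (Cov.orig C)]
          [Sum.inl (Cov.orig C)] cB := by
        simpa using derives_context [] [Sum.inl (Cov.orig C)] dB
      refine ⟨0 + cB + cC, derives_cast (derives_trans h1 (derives_trans h2 dC))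
        (by omega), ?_⟩
      simp at hcB
      simp only [List.length_append]
      omega

end CoverAux

/-- If a CFG `G` in CNF generates a nonempty language not containing `ε`, then for every
string `I` over the terminal alphabet the covering grammar `G'` derives `I`, and the
minimum total error count of such a derivation is at most
`|I| +` (the minimum length of a string of `L(G)`). -/
theorem covering_grammar_derives_everything {N T : Type*}
    (R2 : N → N → N → Prop) (R1 : N → T → Prop) (S : N)
    (hne : ∃ u : List T, Derives (baseProds R2 R1) [Sum.inl S] (u.map Sum.inr) 0)
    (heps : ¬ Derives (baseProds R2 R1) [Sum.inl S] ([] : List (N ⊕ T)) 0) :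
    ∀ w : List T,
      (∃ c : ℕ, Derives (covProds R2 R1) [Sum.inl (Cov.orig S)] (w.map Sum.inr) c) ∧
      sInf {c : ℕ∞ | ∃ m : ℕ, c = m ∧
          Derives (covProds R2 R1) [Sum.inl (Cov.orig S)] (w.map Sum.inr) m}
        ≤ (w.length : ℕ∞) + sInf {c : ℕ∞ | ∃ u : List T,
            Derives (baseProds R2 R1) [Sum.inl S] (u.map Sum.inr) 0 ∧ c = (u.length : ℕ∞)} := by
  intro w
  classical
  have hSu : {n : ℕ | ∃ u : List T,
      Derives (baseProds R2 R1) [Sum.inl S] (u.map Sum.inr) 0 ∧ n = u.length}.Nonempty := by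
    obtain ⟨u, hu⟩ := hne
    exact ⟨u.length, u, hu, rfl⟩
  obtain ⟨u₀, hd₀, hlen₀⟩ := Nat.sInf_mem hSu
  have hGenF : GenF R2 R1 [Sum.inl S] u₀ := derives_to_genF hd₀ u₀ rfl
  have hGen : Gen R2 R1 S u₀ := by
    cases hGenF with
    | nt hA h' => cases h'; simpa using hA
  obtain ⟨c₀, hdc, hle⟩ := gen_cov hGen w
  refine ⟨⟨c₀, hdc⟩, ?_⟩
  have h1 : sInf {c : ℕ∞ | ∃ m : ℕ, c = m ∧
      Derives (covProds R2 R1) [Sum.inl (Cov.orig S)] (w.map Sum.inr) m} ≤ (c₀ : ℕ∞) :=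
    sInf_le ⟨c₀, rfl, hdc⟩
  have h2 : (c₀ : ℕ∞) ≤ (w.length : ℕ∞) + (u₀.length : ℕ∞) := by exact_mod_cast hle
  have h3 : (u₀.length : ℕ∞) ≤ sInf {c : ℕ∞ | ∃ u : List T,
      Derives (baseProds R2 R1) [Sum.inl S] (u.map Sum.inr) 0 ∧ c = (u.length : ℕ∞)} := by
    refine le_sInf ?_
    rintro x ⟨u, hu, rfl⟩
    have : u₀.length ≤ u.length := hlen₀ ▸ Nat.sInf_le ⟨u, hu, rfl⟩
    exact_mod_cast this
  exact h1.trans (h2.trans (add_le_add_right h3 _))
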